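/- Let H > 0, c ≥ 0, t₀ ∈ ℝ, and let a : [t₀,∞) → ℝ be differentiable with a(t) > 0 for all t and a'(t) = H·a(t) + c/a(t)² for all t ≥ t₀. Then a(t) → ∞ as t → ∞, and there exists a constant L > 0 such that a(t)·e^{−Ht} → L as t → ∞; i.e., the scale factor is asymptotically de Sitter with Hubble constant H. -/

import Mathlib

open Real Filter

/-- A scale factor satisfying `a' = H·a + c/a²` with `H > 0`, `c ≥ 0` diverges and is
asymptotically de Sitter: `a(t)·e^{−Ht}` tends to a positive constant. -/
theorem stmt_4 (H c t₀ : ℝ) (hH : 0 < H) (hc : 0 ≤ c)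
    (a : ℝ → ℝ)
    (ha_pos : ∀ t, t₀ ≤ t → 0 < a t)
    (ha_ode : ∀ t, t₀ ≤ t → HasDerivAt a (H * a t + c / (a t) ^ 2) t) :
    Tendsto a atTop atTop ∧
    ∃ L : ℝ, 0 < L ∧ Tendsto (fun t => a t * Real.exp (-H * t)) atTop (nhds L) := by
  set g : ℝ → ℝ := fun t => a t * Real.exp (-H * t) with hg_def
  have hg0 : 0 < g t₀ := mul_pos (ha_pos t₀ le_rfl) (Real.exp_pos _)
  -- derivative of g
  have hg' : ∀ t, t₀ ≤ t → HasDerivAt g (Real.exp (-H * t) * (c / (a t) ^ 2)) t := by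
    intro t ht
    have he : HasDerivAt (fun s => Real.exp (-H * s)) (Real.exp (-H * t) * (-H * 1)) t :=
      (Real.hasDerivAt_exp (-H * t)).comp t ((hasDerivAt_id t).const_mul (-H))
    have hmul := (ha_ode t ht).mul he
    refine HasDerivAt.congr_deriv hmul ?_
    have hat : a t ≠ 0 := (ha_pos t ht).ne'
    ring_nf
  -- g is monotone on [t₀, ∞)
  have hgmono : MonotoneOn g (Set.Ici t₀) := by
    apply monotoneOn_of_deriv_nonneg (convex_Ici t₀)
    · exact fun t ht => (hg' t ht).continuousAt.continuousWithinAt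
    · intro t ht
      rw [interior_Ici] at ht
      exact (hg' t ht.le).differentiableAt.differentiableWithinAt
    · intro t ht
      rw [interior_Ici] at ht
      rw [(hg' t ht.le).deriv]
      exact mul_nonneg (Real.exp_pos _).le (div_nonneg hc (sq_nonneg _))
  have hglb : ∀ t, t₀ ≤ t → g t₀ ≤ g t := fun t ht =>
    hgmono Set.self_mem_Ici ht ht
  -- lower bound on a : a t ≥ g t₀ * exp (H t)
  have halb : ∀ t, t₀ ≤ t → g t₀ * Real.exp (H * t) ≤ a t := by
    intro t ht
    have h1 := hglb t ht
    have h2 : g t * Real.exp (H * t) = a t := by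
      simp only [hg_def]
      rw [mul_assoc, ← Real.exp_add]
      simp
    calc g t₀ * Real.exp (H * t) ≤ g t * Real.exp (H * t) :=
          mul_le_mul_of_nonneg_right h1 (Real.exp_pos _).le
      _ = a t := h2
  -- a → ∞
  have ha_top : Tendsto a atTop atTop := by
    have hexp : Tendsto (fun t : ℝ => Real.exp (H * t)) atTop atTop :=
      Real.tendsto_exp_atTop.comp (Tendsto.const_mul_atTop hH tendsto_id)
    have h1 : Tendsto (fun t => g t₀ * Real.exp (H * t)) atTop atTop :=
      Tendsto.const_mul_atTop hg0 hexp
    refine tendsto_atTop_mono' atTop ?_ h1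
    filter_upwards [eventually_ge_atTop t₀] with t ht using halb t ht
  -- upper bound on g: compare with h t = g t + K exp (-(3H) t), K = c/(3H g₀²)
  set K : ℝ := c / (3 * H * (g t₀) ^ 2) with hK_def
  have hK : 0 ≤ K := div_nonneg hc (by positivity)
  set h : ℝ → ℝ := fun t => g t + K * Real.exp (-(3 * H) * t) with hh_def
  have hh' : ∀ t, t₀ ≤ t →
      HasDerivAt h (Real.exp (-H * t) * (c / (a t) ^ 2)
        + K * (Real.exp (-(3 * H) * t) * (-(3 * H) * 1))) t := by
    intro t ht
    have he3 : HasDerivAt (fun s => Real.exp (-(3 * H) * s))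
        (Real.exp (-(3 * H) * t) * (-(3 * H) * 1)) t :=
      (Real.hasDerivAt_exp (-(3 * H) * t)).comp t ((hasDerivAt_id t).const_mul (-(3 * H)))
    exact (hg' t ht).add (he3.const_mul K)
  have hderiv_nonpos : ∀ t, t₀ ≤ t →
      Real.exp (-H * t) * (c / (a t) ^ 2)
        + K * (Real.exp (-(3 * H) * t) * (-(3 * H) * 1)) ≤ 0 := by
    intro t ht
    have hb : 0 < g t₀ * Real.exp (H * t) := mul_pos hg0 (Real.exp_pos _)
    have hle : (g t₀ * Real.exp (H * t)) ^ 2 ≤ (a t) ^ 2 := by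
      have := halb t ht
      nlinarith [hb.le]
    have hdiv : c / (a t) ^ 2 ≤ c / (g t₀ * Real.exp (H * t)) ^ 2 :=
      div_le_div_of_nonneg_left hc (by positivity) hle
    have hKmul : K * (3 * H) = c / (g t₀) ^ 2 := by
      rw [hK_def]
      field_simp
    have key : Real.exp (-H * t) * (c / (g t₀ * Real.exp (H * t)) ^ 2)
        = (c / (g t₀) ^ 2) * Real.exp (-(3 * H) * t) := by
      rw [mul_pow, ← Real.exp_nat_mul, div_mul_eq_div_div, mul_div_assoc',
        mul_comm (Real.exp (-H * t)), mul_div_assoc, ← Real.exp_sub]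
      congr 1
      push_cast
      ring
    have h1 : Real.exp (-H * t) * (c / (a t) ^ 2)
        ≤ (c / (g t₀) ^ 2) * Real.exp (-(3 * H) * t) := by
      rw [← key]
      exact mul_le_mul_of_nonneg_left hdiv (Real.exp_pos _).le
    have h2 : K * (Real.exp (-(3 * H) * t) * (-(3 * H) * 1))
        = -((c / (g t₀) ^ 2) * Real.exp (-(3 * H) * t)) := by
      rw [← hKmul]; ring
    linarith
  have hhanti : AntitoneOn h (Set.Ici t₀) := by
    apply antitoneOn_of_deriv_nonpos (convex_Ici t₀)
    · exact fun t ht => (hh' t ht).continuousAt.continuousWithinAt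
    · intro t ht
      rw [interior_Ici] at ht
      exact (hh' t ht.le).differentiableAt.differentiableWithinAt
    · intro t ht
      rw [interior_Ici] at ht
      rw [(hh' t ht.le).deriv]
      exact hderiv_nonpos t ht.le
  have hgub : ∀ t, t₀ ≤ t → g t ≤ h t₀ := by
    intro t ht
    have h1 : h t ≤ h t₀ := hhanti Set.self_mem_Ici ht ht
    have h2 : g t ≤ h t := by
      have : 0 ≤ K * Real.exp (-(3 * H) * t) := mul_nonneg hK (Real.exp_pos _).le
      simp only [hh_def]; linarith
    linarith
  -- Convergence of g via monotone bounded
  set G : ℝ → ℝ := fun t => g (max t t₀) with hG_def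
  have hGmono : Monotone G := fun s t hst =>
    hgmono (le_max_right s t₀) (le_max_right t t₀) (max_le_max hst le_rfl)
  have hGbdd : BddAbove (Set.range G) := by
    refine ⟨h t₀, ?_⟩
    rintro x ⟨t, rfl⟩
    exact hgub (max t t₀) (le_max_right _ _)
  have hGtend : Tendsto G atTop (nhds (⨆ t, G t)) := tendsto_atTop_ciSup hGmono hGbdd
  have hLpos : 0 < ⨆ t, G t := by
    have h1 : G t₀ ≤ ⨆ t, G t := le_ciSup hGbdd t₀
    have h2 : G t₀ = g t₀ := by simp [hG_def]
    linarith
  refine ⟨ha_top, ⨆ t, G t, hLpos, ?_⟩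
  refine hGtend.congr' ?_
  filter_upwards [eventually_ge_atTop t₀] with t ht
  simp [hG_def, max_eq_left ht]
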